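/- Let G be a finite simple graph on n ≥ 2 vertices, let G ∘ K₁ be its corona, and let k be an integer with n < k < 2n. Then the k-dominating graph D_k(G ∘ K₁) is Eulerian if and only if n is even and k = n + 1. -/

import Mathlib

open SimpleGraph

/-- `D` is a dominating set of `G`: every vertex not in `D` has a neighbour in `D`. -/
def IsDomSet {V : Type*} (G : SimpleGraph V) (D : Set V) : Prop :=
  ∀ v ∉ D, ∃ u ∈ D, G.Adj u v

/-- The dominating graph of `G`: vertices are dominating sets of `G`, two dominating
sets are adjacent iff their symmetric difference has exactly one element. -/
def DomGraph {V : Type*} (G : SimpleGraph V) :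
    SimpleGraph {D : Set V // IsDomSet G D} where
  Adj A B := (symmDiff A.1 B.1).ncard = 1
  symm := ⟨fun A B h => by
    have h' : (symmDiff A.1 B.1).ncard = 1 := h
    show (symmDiff B.1 A.1).ncard = 1
    rwa [symmDiff_comm]⟩
  loopless := ⟨fun A h => by
    have h' : (symmDiff A.1 A.1).ncard = 1 := h
    simp [symmDiff_self, Set.bot_eq_empty] at h'⟩

/-- The `k`-dominating graph of `G`: vertices are dominating sets of `G` of cardinality
at most `k`, two such sets are adjacent iff their symmetric difference has exactly one
element. -/
def KDomGraph {V : Type*} (G : SimpleGraph V) (k : ℕ) :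
    SimpleGraph {D : Set V // IsDomSet G D ∧ D.ncard ≤ k} where
  Adj A B := (symmDiff A.1 B.1).ncard = 1
  symm := ⟨fun A B h => by
    have h' : (symmDiff A.1 B.1).ncard = 1 := h
    show (symmDiff B.1 A.1).ncard = 1
    rwa [symmDiff_comm]⟩
  loopless := ⟨fun A h => by
    have h' : (symmDiff A.1 A.1).ncard = 1 := h
    simp [symmDiff_self, Set.bot_eq_empty] at h'⟩

/-- A graph is Eulerian iff every vertex has even degree and any two edges lie in the
same connected component (i.e. at most one component contains an edge). -/
def IsEulerian {W : Type*} (H : SimpleGraph W) : Prop :=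
  (∀ v : W, Even (H.neighborSet v).ncard) ∧
  ∀ u v x y : W, H.Adj u v → H.Adj x y → H.Reachable u x

/-- The corona `G ∘ K₁` of `G`: attach a pendant vertex to every vertex of `G`. -/
def corona {V : Type*} (G : SimpleGraph V) : SimpleGraph (V ⊕ V) where
  Adj x y :=
    match x, y with
    | Sum.inl a, Sum.inl b => G.Adj a b
    | Sum.inl a, Sum.inr b => a = b
    | Sum.inr a, Sum.inl b => a = b
    | Sum.inr _, Sum.inr _ => False
  symm := ⟨by
    rintro (a | a) (b | b) h
    · exact G.symm.symm _ _ h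
    · exact h.symm
    · exact h.symm
    · exact h.elim⟩
  loopless := ⟨by
    rintro (a | a) h
    · exact G.loopless.irrefl a h
    · exact h⟩

section Gen

variable {W : Type*}

lemma isDomSet_mono {H : SimpleGraph W} {D D' : Set W} (h : IsDomSet H D) (hsub : D ⊆ D') :
    IsDomSet H D' := by
  intro v hv
  obtain ⟨u, hu, hadj⟩ := h v (fun hvD => hv (hsub hvD))
  exact ⟨u, hsub hu, hadj⟩

lemma symmDiff_singleton_of_mem {D : Set W} {x : W} (hx : x ∈ D) :
    symmDiff D {x} = D \ {x} := by
  ext y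
  simp only [Set.mem_symmDiff, Set.mem_singleton_iff, Set.mem_diff]
  constructor
  · rintro (⟨hy, hne⟩ | ⟨rfl, h⟩)
    · exact ⟨hy, hne⟩
    · exact absurd hx h
  · rintro ⟨hy, hne⟩
    exact Or.inl ⟨hy, hne⟩

lemma symmDiff_singleton_of_not_mem {D : Set W} {x : W} (hx : x ∉ D) :
    symmDiff D {x} = insert x D := by
  ext y
  simp only [Set.mem_symmDiff, Set.mem_singleton_iff, Set.mem_insert_iff]
  constructor
  · rintro (⟨hy, _⟩ | ⟨rfl, _⟩)
    · exact Or.inr hy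
    · exact Or.inl rfl
  · rintro (rfl | hy)
    · exact Or.inr ⟨rfl, hx⟩
    · exact Or.inl ⟨hy, fun h => hx (h ▸ hy)⟩

lemma kdom_adj_iff [Fintype W] {H : SimpleGraph W} {k : ℕ}
    (A B : {D : Set W // IsDomSet H D ∧ D.ncard ≤ k}) :
    (KDomGraph H k).Adj A B ↔ ∃ x, B.1 = symmDiff A.1 {x} := by
  constructor
  · intro h
    have h' : (symmDiff A.1 B.1).ncard = 1 := h
    obtain ⟨x, hx⟩ := Set.ncard_eq_one.mp h'
    refine ⟨x, ?_⟩
    rw [← hx, symmDiff_symmDiff_cancel_left]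
  · rintro ⟨x, hx⟩
    show (symmDiff A.1 B.1).ncard = 1
    rw [hx, symmDiff_symmDiff_cancel_left, Set.ncard_singleton]

/-- The set of legal single-vertex moves from a dominating set `D`. -/
def moveSet (H : SimpleGraph W) (k : ℕ) (D : Set W) : Set W :=
  {x | (x ∉ D ∧ D.ncard + 1 ≤ k) ∨ (x ∈ D ∧ IsDomSet H (D \ {x}))}

lemma moveSet_spec [Fintype W] {H : SimpleGraph W} {k : ℕ}
    {D : Set W} (hD : IsDomSet H D) (hDk : D.ncard ≤ k) {x : W} (hx : x ∈ moveSet H k D) :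
    IsDomSet H (symmDiff D {x}) ∧ (symmDiff D {x}).ncard ≤ k := by
  rcases hx with ⟨hxD, hcard⟩ | ⟨hxD, hdom⟩
  · rw [symmDiff_singleton_of_not_mem hxD]
    exact ⟨isDomSet_mono hD (Set.subset_insert _ _),
      by rw [Set.ncard_insert_of_notMem hxD]; exact hcard⟩
  · rw [symmDiff_singleton_of_mem hxD]
    exact ⟨hdom, le_trans (Set.ncard_le_ncard Set.diff_subset (Set.toFinite _)) hDk⟩

lemma kdom_degree [Fintype W] (H : SimpleGraph W) (k : ℕ)
    (A : {D : Set W // IsDomSet H D ∧ D.ncard ≤ k}) :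
    ((KDomGraph H k).neighborSet A).ncard = (moveSet H k A.1).ncard := by
  classical
  set D := A.1 with hDdef
  set f : W → {D : Set W // IsDomSet H D ∧ D.ncard ≤ k} := fun x =>
    if h : IsDomSet H (symmDiff D {x}) ∧ (symmDiff D {x}).ncard ≤ k then ⟨symmDiff D {x}, h⟩
    else A with hf
  have hfval : ∀ x ∈ moveSet H k D, (f x).1 = symmDiff D {x} := by
    intro x hx
    rw [hf]
    simp only [dif_pos (show IsDomSet H (symmDiff D {x}) ∧ (symmDiff D {x}).ncard ≤ k from
      moveSet_spec A.2.1 A.2.2 hx)]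
  have himg : (KDomGraph H k).neighborSet A = f '' moveSet H k D := by
    ext B
    constructor
    · intro hB
      obtain ⟨x, hx⟩ := (kdom_adj_iff A B).mp hB
      have hxm : x ∈ moveSet H k D := by
        by_cases hxD : x ∈ D
        · refine Or.inr ⟨hxD, ?_⟩
          rw [← symmDiff_singleton_of_mem hxD, ← hx]
          exact B.2.1
        · refine Or.inl ⟨hxD, ?_⟩
          rw [← Set.ncard_insert_of_notMem hxD, ← symmDiff_singleton_of_not_mem hxD, ← hx]
          exact B.2.2
      exact ⟨x, hxm, by apply Subtype.ext; rw [hfval x hxm, ← hx]⟩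
    · rintro ⟨x, hxm, rfl⟩
      apply (kdom_adj_iff A (f x)).mpr
      exact ⟨x, hfval x hxm⟩
  rw [himg]
  apply Set.ncard_image_of_injOn
  intro x hx y hy hxy
  have : symmDiff D {x} = symmDiff D {y} := by
    rw [← hfval x hx, ← hfval y hy, hxy]
  have h2 : ({x} : Set W) = {y} := by
    have := congrArg (fun s => symmDiff D s) this
    simpa [symmDiff_symmDiff_cancel_left] using this
  exact Set.singleton_eq_singleton_iff.mp h2

end Gen

section Corona

variable {V : Type*}

lemma corona_adj_inl_inr {G : SimpleGraph V} {a b : V} :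
    (corona G).Adj (Sum.inl a) (Sum.inr b) ↔ a = b := Iff.rfl

lemma isDomSet_corona_iff (G : SimpleGraph V) (D : Set (V ⊕ V)) :
    IsDomSet (corona G) D ↔ ∀ a, Sum.inl a ∈ D ∨ Sum.inr a ∈ D := by
  constructor
  · intro h a
    by_cases hr : Sum.inr a ∈ D
    · exact Or.inr hr
    · obtain ⟨u, hu, hadj⟩ := h _ hr
      match u, hadj with
      | Sum.inl b, hadj =>
        have hb : b = a := hadj
        exact Or.inl (hb ▸ hu)
      | Sum.inr b, hadj => exact hadj.elim
  · intro h v hv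
    match v with
    | Sum.inl a =>
      have hr : Sum.inr a ∈ D := (h a).resolve_left hv
      exact ⟨Sum.inr a, hr, rfl⟩
    | Sum.inr a =>
      have hl : Sum.inl a ∈ D := (h a).resolve_right hv
      exact ⟨Sum.inl a, hl, rfl⟩

/-- The set of vertices of `G` whose both copies lie in `D`. -/
def bothOf (D : Set (V ⊕ V)) : Set V := {a | Sum.inl a ∈ D ∧ Sum.inr a ∈ D}

lemma corona_dom_ncard [Fintype V] {D : Set (V ⊕ V)}
    (hD : ∀ a, Sum.inl a ∈ D ∨ Sum.inr a ∈ D) :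
    D.ncard = Fintype.card V + (bothOf D).ncard := by
  classical
  set A1 : Set V := Sum.inl ⁻¹' D with hA1
  set A2 : Set V := Sum.inr ⁻¹' D with hA2
  have hsplit : D = Sum.inl '' A1 ∪ Sum.inr '' A2 := by
    ext x
    cases x <;> simp [hA1, hA2]
  have hdisj : Disjoint (Sum.inl '' A1 : Set (V ⊕ V)) (Sum.inr '' A2) := by
    rw [Set.disjoint_left]
    rintro x ⟨a, _, rfl⟩ ⟨b, _, hb⟩
    exact Sum.inl_ne_inr hb.symm
  have h1 : D.ncard = A1.ncard + A2.ncard := by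
    rw [hsplit, Set.ncard_union_eq hdisj (Set.toFinite _) (Set.toFinite _),
      Set.ncard_image_of_injective _ Sum.inl_injective,
      Set.ncard_image_of_injective _ Sum.inr_injective]
  have huniv : A1 ∪ A2 = Set.univ := by
    ext a
    simpa [hA1, hA2] using hD a
  have hinter : A1 ∩ A2 = bothOf D := rfl
  have h2 := Set.ncard_union_add_ncard_inter A1 A2 (Set.toFinite _) (Set.toFinite _)
  rw [huniv, hinter, Set.ncard_univ, Nat.card_eq_fintype_card] at h2
  omega

lemma corona_removable (G : SimpleGraph V) {D : Set (V ⊕ V)}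
    (hD : ∀ a, Sum.inl a ∈ D ∨ Sum.inr a ∈ D) :
    {x | x ∈ D ∧ IsDomSet (corona G) (D \ {x})} =
      Sum.inl '' bothOf D ∪ Sum.inr '' bothOf D := by
  ext x
  simp only [Set.mem_setOf_eq, Set.mem_union, Set.mem_image]
  constructor
  · rintro ⟨hxD, hdom⟩
    rw [isDomSet_corona_iff] at hdom
    match x with
    | Sum.inl a =>
      refine Or.inl ⟨a, ⟨hxD, ?_⟩, rfl⟩
      rcases hdom a with h | h
      · exact (h.2 rfl).elim
      · exact h.1
    | Sum.inr a =>
      refine Or.inr ⟨a, ⟨?_, hxD⟩, rfl⟩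
      rcases hdom a with h | h
      · exact h.1
      · exact (h.2 rfl).elim
  · rintro (⟨a, ⟨h1, h2⟩, rfl⟩ | ⟨a, ⟨h1, h2⟩, rfl⟩)
    · refine ⟨h1, ?_⟩
      rw [isDomSet_corona_iff]
      intro a'
      by_cases ha' : a' = a
      · subst ha'
        exact Or.inr ⟨h2, by simp⟩
      · rcases hD a' with h | h
        · exact Or.inl ⟨h, by simp [ha']⟩
        · exact Or.inr ⟨h, by simp⟩
    · refine ⟨h2, ?_⟩
      rw [isDomSet_corona_iff]
      intro a'
      by_cases ha' : a' = a
      · subst ha'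
        exact Or.inl ⟨h1, by simp⟩
      · rcases hD a' with h | h
        · exact Or.inl ⟨h, by simp⟩
        · exact Or.inr ⟨h, by simp [ha']⟩

lemma corona_removable_ncard [Fintype V] (G : SimpleGraph V) {D : Set (V ⊕ V)}
    (hD : ∀ a, Sum.inl a ∈ D ∨ Sum.inr a ∈ D) :
    {x | x ∈ D ∧ IsDomSet (corona G) (D \ {x})}.ncard = 2 * (bothOf D).ncard := by
  rw [corona_removable G hD]
  have hdisj : Disjoint (Sum.inl '' bothOf D : Set (V ⊕ V)) (Sum.inr '' bothOf D) := by
    rw [Set.disjoint_left]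
    rintro x ⟨a, _, rfl⟩ ⟨b, _, hb⟩
    exact Sum.inl_ne_inr hb.symm
  rw [Set.ncard_union_eq hdisj (Set.toFinite _) (Set.toFinite _),
    Set.ncard_image_of_injective _ Sum.inl_injective,
    Set.ncard_image_of_injective _ Sum.inr_injective]
  ring

lemma corona_moveSet_ncard_lt [Fintype V] (G : SimpleGraph V) (k : ℕ) {D : Set (V ⊕ V)}
    (hD : ∀ a, Sum.inl a ∈ D ∨ Sum.inr a ∈ D) (hlt : D.ncard < k) :
    (moveSet (corona G) k D).ncard = D.ncard := by
  have hmove : moveSet (corona G) k D = Dᶜ ∪ {x | x ∈ D ∧ IsDomSet (corona G) (D \ {x})} := by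
    ext x
    simp only [moveSet, Set.mem_setOf_eq, Set.mem_union, Set.mem_compl_iff]
    constructor
    · rintro (⟨h, _⟩ | h)
      · exact Or.inl h
      · exact Or.inr h
    · rintro (h | h)
      · exact Or.inl ⟨h, hlt⟩
      · exact Or.inr h
  have hdisj : Disjoint (Dᶜ : Set (V ⊕ V)) {x | x ∈ D ∧ IsDomSet (corona G) (D \ {x})} := by
    rw [Set.disjoint_left]
    intro x hx hx'
    exact hx hx'.1
  have hcompl := Set.ncard_add_ncard_compl D (Set.toFinite _) (Set.toFinite _)
  rw [Nat.card_eq_fintype_card, Fintype.card_sum] at hcompl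
  have hcard := corona_dom_ncard hD
  have hb : (bothOf D).ncard ≤ Fintype.card V := by
    have := Set.ncard_le_ncard (Set.subset_univ (bothOf D)) (Set.toFinite _)
    rwa [Set.ncard_univ, Nat.card_eq_fintype_card] at this
  rw [hmove, Set.ncard_union_eq hdisj (Set.toFinite _) (Set.toFinite _),
    corona_removable_ncard G hD]
  omega

lemma corona_moveSet_ncard_eq [Fintype V] (G : SimpleGraph V) (k : ℕ) {D : Set (V ⊕ V)}
    (hD : ∀ a, Sum.inl a ∈ D ∨ Sum.inr a ∈ D) (heq : D.ncard = k) :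
    (moveSet (corona G) k D).ncard = 2 * (bothOf D).ncard := by
  have hmove : moveSet (corona G) k D = {x | x ∈ D ∧ IsDomSet (corona G) (D \ {x})} := by
    ext x
    simp only [moveSet, Set.mem_setOf_eq]
    constructor
    · rintro (⟨_, h⟩ | h)
      · omega
      · exact h
    · exact fun h => Or.inr h
  rw [hmove]
  exact corona_removable_ncard G hD

end Corona

section Main

variable {V : Type*} [Fintype V]

lemma reach_aux (G : SimpleGraph V) (k : ℕ) (hk : Fintype.card V < k)
    (hbase : IsDomSet (corona G) (Set.range Sum.inl) ∧ (Set.range Sum.inl : Set (V ⊕ V)).ncard ≤ k) :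
    ∀ (m : ℕ) (T : Set (V ⊕ V)) (h1 : ∀ a, Sum.inl a ∈ T ∨ Sum.inr a ∈ T)
      (h2 : ∀ a, ¬(Sum.inl a ∈ T ∧ Sum.inr a ∈ T))
      (hm : (Sum.inr ⁻¹' T).ncard = m)
      (hT : IsDomSet (corona G) T ∧ T.ncard ≤ k),
      (KDomGraph (corona G) k).Reachable ⟨T, hT⟩ ⟨Set.range Sum.inl, hbase⟩ := by
  intro m
  induction m with
  | zero =>
    intro T h1 h2 hm hT
    have hemp : Sum.inr ⁻¹' T = ∅ := (Set.ncard_eq_zero (Set.toFinite _)).mp hm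
    have hTeq : T = Set.range Sum.inl := by
      ext x
      match x with
      | Sum.inl a =>
        simp only [Set.mem_range]
        exact ⟨fun _ => ⟨a, rfl⟩, fun _ => (h1 a).resolve_right
          (fun h => by simpa [hemp] using (Set.mem_preimage.mpr h : a ∈ Sum.inr ⁻¹' T))⟩
      | Sum.inr a =>
        simp only [Set.mem_range]
        constructor
        · intro h
          exact absurd (Set.mem_preimage.mpr h : a ∈ Sum.inr ⁻¹' T) (by simp [hemp])
        · rintro ⟨b, hb⟩
          exact absurd hb (by simp)
    have : (⟨T, hT⟩ : {D : Set (V ⊕ V) // IsDomSet (corona G) D ∧ D.ncard ≤ k}) =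
        ⟨Set.range Sum.inl, hbase⟩ := Subtype.ext hTeq
    rw [this]
  | succ m ih =>
    intro T h1 h2 hm hT
    obtain ⟨a, ha⟩ := Set.nonempty_of_ncard_ne_zero (by rw [hm]; omega :
      (Sum.inr ⁻¹' T).ncard ≠ 0)
    have ha' : Sum.inr a ∈ T := ha
    have hla : Sum.inl a ∉ T := fun h => h2 a ⟨h, ha'⟩
    have hboth : bothOf T = ∅ := Set.eq_empty_iff_forall_notMem.mpr (fun a' h => h2 a' h)
    have hTcard : T.ncard = Fintype.card V := by
      rw [corona_dom_ncard h1, hboth]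
      simp
    set T₁ : Set (V ⊕ V) := insert (Sum.inl a) T with hT1def
    have hT1 : IsDomSet (corona G) T₁ ∧ T₁.ncard ≤ k := by
      refine ⟨isDomSet_mono hT.1 (Set.subset_insert _ _), ?_⟩
      rw [Set.ncard_insert_of_notMem hla, hTcard]
      omega
    set T₂ : Set (V ⊕ V) := T₁ \ {Sum.inr a} with hT2def
    have h1' : ∀ a', Sum.inl a' ∈ T₂ ∨ Sum.inr a' ∈ T₂ := by
      intro a'
      by_cases ha'' : a' = a
      · subst ha''
        exact Or.inl ⟨Set.mem_insert _ _, by simp⟩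
      · rcases h1 a' with h | h
        · exact Or.inl ⟨Set.mem_insert_of_mem _ h, by simp⟩
        · exact Or.inr ⟨Set.mem_insert_of_mem _ h, by simp [ha'']⟩
    have h2' : ∀ a', ¬(Sum.inl a' ∈ T₂ ∧ Sum.inr a' ∈ T₂) := by
      rintro a' ⟨hl, hr⟩
      have hne : a' ≠ a := by
        intro h
        subst h
        exact hr.2 rfl
      have hrT : Sum.inr a' ∈ T := by
        rcases hr.1 with h | h
        · exact absurd h (by simp)
        · exact h
      have hlT : Sum.inl a' ∈ T := by
        rcases hl.1 with h | h
        · exact absurd h (by simp [hne])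
        · exact h
      exact h2 a' ⟨hlT, hrT⟩
    have hm' : (Sum.inr ⁻¹' T₂).ncard = m := by
      have : Sum.inr ⁻¹' T₂ = (Sum.inr ⁻¹' T) \ {a} := by
        ext a'
        simp only [Set.mem_preimage, hT2def, hT1def, Set.mem_diff, Set.mem_insert_iff,
          Set.mem_singleton_iff]
        constructor
        · rintro ⟨h | h, hne⟩
          · exact absurd h (by simp)
          · exact ⟨h, fun he => hne (by rw [he])⟩
        · rintro ⟨h, hne⟩
          exact ⟨Or.inr h, by simp [hne]⟩
      rw [this, Set.ncard_diff_singleton_of_mem ha, hm]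
      omega
    have hT2 : IsDomSet (corona G) T₂ ∧ T₂.ncard ≤ k := by
      refine ⟨(isDomSet_corona_iff G T₂).mpr h1', ?_⟩
      exact le_trans (Set.ncard_le_ncard Set.diff_subset (Set.toFinite _)) hT1.2
    have adj1 : (KDomGraph (corona G) k).Adj ⟨T, hT⟩ ⟨T₁, hT1⟩ :=
      (kdom_adj_iff _ _).mpr ⟨Sum.inl a, by rw [symmDiff_singleton_of_not_mem hla]⟩
    have adj2 : (KDomGraph (corona G) k).Adj ⟨T₁, hT1⟩ ⟨T₂, hT2⟩ :=
      (kdom_adj_iff _ _).mpr ⟨Sum.inr a,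
        by rw [symmDiff_singleton_of_mem (Set.mem_insert_of_mem _ ha')]⟩
    exact adj1.reachable.trans (adj2.reachable.trans (ih T₂ h1' h2' hm' hT2))

lemma reach_all (G : SimpleGraph V) (k : ℕ) (hk : Fintype.card V < k)
    (hk2 : k ≤ Fintype.card V + 1)
    (hbase : IsDomSet (corona G) (Set.range Sum.inl) ∧ (Set.range Sum.inl : Set (V ⊕ V)).ncard ≤ k)
    (A : {D : Set (V ⊕ V) // IsDomSet (corona G) D ∧ D.ncard ≤ k}) :
    (KDomGraph (corona G) k).Reachable A ⟨Set.range Sum.inl, hbase⟩ := by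
  obtain ⟨D, hD⟩ := A
  have h1 : ∀ a, Sum.inl a ∈ D ∨ Sum.inr a ∈ D := (isDomSet_corona_iff G D).mp hD.1
  have hcard := corona_dom_ncard h1
  have hble : (bothOf D).ncard ≤ 1 := by
    have := hD.2
    omega
  rcases Nat.le_one_iff_eq_zero_or_eq_one.mp hble with hb | hb
  · have h2 : ∀ a, ¬(Sum.inl a ∈ D ∧ Sum.inr a ∈ D) := by
      intro a h
      have : a ∈ bothOf D := h
      rw [(Set.ncard_eq_zero (Set.toFinite _)).mp hb] at this
      exact this
    exact reach_aux G k hk hbase _ D h1 h2 rfl hD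
  · obtain ⟨c, hc⟩ := Set.ncard_eq_one.mp hb
    have hcB : c ∈ bothOf D := by rw [hc]; exact rfl
    set D' : Set (V ⊕ V) := D \ {Sum.inr c} with hD'def
    have h1' : ∀ a, Sum.inl a ∈ D' ∨ Sum.inr a ∈ D' := by
      intro a
      by_cases ha : a = c
      · subst ha
        exact Or.inl ⟨hcB.1, by simp⟩
      · rcases h1 a with h | h
        · exact Or.inl ⟨h, by simp⟩
        · exact Or.inr ⟨h, by simp [ha]⟩
    have h2' : ∀ a, ¬(Sum.inl a ∈ D' ∧ Sum.inr a ∈ D') := by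
      rintro a ⟨hl, hr⟩
      have hne : a ≠ c := fun h => hr.2 (by rw [h]; exact rfl)
      have : a ∈ bothOf D := ⟨hl.1, hr.1⟩
      rw [hc] at this
      exact hne this
    have hD' : IsDomSet (corona G) D' ∧ D'.ncard ≤ k :=
      ⟨(isDomSet_corona_iff G D').mpr h1',
        le_trans (Set.ncard_le_ncard Set.diff_subset (Set.toFinite _)) hD.2⟩
    have adj : (KDomGraph (corona G) k).Adj ⟨D, hD⟩ ⟨D', hD'⟩ :=
      (kdom_adj_iff _ _).mpr ⟨Sum.inr c, by rw [symmDiff_singleton_of_mem hcB.2]⟩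
    exact adj.reachable.trans (reach_aux G k hk hbase _ D' h1' h2' rfl hD')

end Main

/-- For a graph `G` on `n ≥ 2` vertices and `n < k < 2n`, the `k`-dominating graph of
the corona `G ∘ K₁` is Eulerian iff `n` is even and `k = n + 1`. -/
theorem kDomGraph_corona_eulerian_iff {V : Type*} [Fintype V] (G : SimpleGraph V)
    (hn : 2 ≤ Fintype.card V) (k : ℕ)
    (hk1 : Fintype.card V < k) (hk2 : k < 2 * Fintype.card V) :
    IsEulerian (KDomGraph (corona G) k) ↔
      Even (Fintype.card V) ∧ k = Fintype.card V + 1 := by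
  classical
  have h10 : ∀ a : V, Sum.inl a ∈ (Set.range Sum.inl : Set (V ⊕ V)) ∨
      Sum.inr a ∈ (Set.range Sum.inl : Set (V ⊕ V)) := fun a => Or.inl ⟨a, rfl⟩
  have hboth0 : bothOf (Set.range Sum.inl : Set (V ⊕ V)) = ∅ := by
    ext a
    simp only [bothOf, Set.mem_setOf_eq, Set.mem_range, Set.mem_empty_iff_false, iff_false]
    rintro ⟨-, b, hb⟩
    exact absurd hb (by simp)
  have hA0card : (Set.range Sum.inl : Set (V ⊕ V)).ncard = Fintype.card V := by
    rw [corona_dom_ncard h10, hboth0]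
    simp
  have hbase : IsDomSet (corona G) (Set.range Sum.inl) ∧
      (Set.range Sum.inl : Set (V ⊕ V)).ncard ≤ k := by
    refine ⟨(isDomSet_corona_iff G _).mpr h10, ?_⟩
    rw [hA0card]
    omega
  constructor
  · rintro ⟨hdeg, -⟩
    have hdeg0 := hdeg ⟨Set.range Sum.inl, hbase⟩
    rw [kdom_degree, corona_moveSet_ncard_lt G k h10 (by rw [hA0card]; exact hk1),
      hA0card] at hdeg0
    refine ⟨hdeg0, ?_⟩
    by_contra hne
    have hk3 : Fintype.card V + 2 ≤ k := by omega
    have hV : Nonempty V := Fintype.card_pos_iff.mp (by omega)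
    obtain ⟨a₀⟩ := hV
    set D₁ : Set (V ⊕ V) := insert (Sum.inr a₀) (Set.range Sum.inl) with hD₁def
    have h11 : ∀ a : V, Sum.inl a ∈ D₁ ∨ Sum.inr a ∈ D₁ :=
      fun a => Or.inl (Set.mem_insert_of_mem _ ⟨a, rfl⟩)
    have hboth1 : bothOf D₁ = {a₀} := by
      ext a
      simp only [bothOf, Set.mem_setOf_eq, hD₁def, Set.mem_insert_iff, Set.mem_range,
        Set.mem_singleton_iff]
      constructor
      · rintro ⟨-, h | ⟨b, hb⟩⟩
        · exact Sum.inr_injective h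
        · exact absurd hb (by simp)
      · rintro rfl
        exact ⟨Or.inr ⟨_, rfl⟩, Or.inl rfl⟩
    have hD1card : D₁.ncard = Fintype.card V + 1 := by
      rw [corona_dom_ncard h11, hboth1, Set.ncard_singleton]
    have hD1 : IsDomSet (corona G) D₁ ∧ D₁.ncard ≤ k :=
      ⟨(isDomSet_corona_iff G _).mpr h11, by omega⟩
    have hdeg1 := hdeg ⟨D₁, hD1⟩
    rw [kdom_degree, corona_moveSet_ncard_lt G k h11 (by omega), hD1card] at hdeg1
    exact (Nat.even_add_one.mp hdeg1) hdeg0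
  · rintro ⟨hnE, rfl⟩
    constructor
    · intro A
      rw [kdom_degree]
      have h1 : ∀ a, Sum.inl a ∈ A.1 ∨ Sum.inr a ∈ A.1 := (isDomSet_corona_iff G A.1).mp A.2.1
      have hcard := corona_dom_ncard h1
      by_cases hlt : A.1.ncard < Fintype.card V + 1
      · rw [corona_moveSet_ncard_lt G _ h1 hlt]
        have hb0 : (bothOf A.1).ncard = 0 := by omega
        rw [hcard, hb0]
        simpa using hnE
      · have heq : A.1.ncard = Fintype.card V + 1 := le_antisymm A.2.2 (not_lt.mp hlt)
        rw [corona_moveSet_ncard_eq G _ h1 heq]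
        exact even_two_mul _
    · intro u v x y _ _
      exact (reach_all G _ hk1 (le_refl _) hbase u).trans
        (reach_all G _ hk1 (le_refl _) hbase x).symm
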